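/- (Stieltjes inversion) For a positive finite Borel measure μ on ℝ with Stieltjes transform s_μ(z) = ∫ (x−z)⁻¹ dμ(x) for Im z > 0: (i) for every b > 0 the function a ↦ (1/π)·Im s_μ(a+ib) is nonnegative and integrates to μ(ℝ); (ii) the measures (1/π)·Im s_μ(a+ib) da converge weakly to μ as b ↓ 0; (iii) b·Im s_μ(ib) → μ(ℝ) as b → ∞. -/

import Mathlib

open MeasureTheory Filter Real

/-- The Stieltjes transform of a measure on `ℝ`. -/
noncomputable def stieltjes (μ : Measure ℝ) (z : ℂ) : ℂ :=
  ∫ x, ((x : ℂ) - z)⁻¹ ∂μ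


lemma gP_eq {b : ℝ} (hb : 0 < b) : (fun u : ℝ => b / (u ^ 2 + b ^ 2))
    = fun u : ℝ => b⁻¹ * (1 + (b⁻¹ * u) ^ 2)⁻¹ := by
  funext u
  have hb' : b ≠ 0 := hb.ne'
  field_simp
  ring

lemma gP_integrable {b : ℝ} (hb : 0 < b) : Integrable (fun u : ℝ => b / (u ^ 2 + b ^ 2)) := by
  rw [gP_eq hb]
  exact (integrable_inv_one_add_sq.comp_mul_left' (inv_ne_zero hb.ne')).const_mul _

lemma gP_integral {b : ℝ} (hb : 0 < b) : ∫ u : ℝ, b / (u ^ 2 + b ^ 2) = π := by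
  rw [gP_eq hb]
  rw [integral_const_mul, Measure.integral_comp_inv_mul_left (fun t : ℝ => (1 + t ^ 2)⁻¹) b,
    integral_univ_inv_one_add_sq]
  rw [abs_of_pos hb, smul_eq_mul]
  field_simp

lemma poisson_integrable_a {b : ℝ} (hb : 0 < b) (x : ℝ) :
    Integrable (fun a : ℝ => b / ((x - a) ^ 2 + b ^ 2)) :=
  (MeasureTheory.integrable_comp_sub_left (fun u : ℝ => b / (u ^ 2 + b ^ 2)) x).2 (gP_integrable hb)

lemma poisson_integral_a {b : ℝ} (hb : 0 < b) (x : ℝ) :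
    ∫ a : ℝ, b / ((x - a) ^ 2 + b ^ 2) = π := by
  rw [MeasureTheory.integral_sub_left_eq_self (fun u : ℝ => b / (u ^ 2 + b ^ 2)) volume x]
  exact gP_integral hb

lemma denom_pos {b : ℝ} (hb : 0 < b) (u : ℝ) : 0 < u ^ 2 + b ^ 2 :=
  add_pos_of_nonneg_of_pos (sq_nonneg u) (pow_pos hb 2)

lemma F_cont {b : ℝ} (hb : 0 < b) :
    Continuous (fun p : ℝ × ℝ => b / ((p.2 - p.1) ^ 2 + b ^ 2)) := by
  apply continuous_const.div
  · continuity
  · intro p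
    exact (denom_pos hb _).ne'

lemma F_nonneg {b : ℝ} (hb : 0 < b) (p : ℝ × ℝ) : 0 ≤ b / ((p.2 - p.1) ^ 2 + b ^ 2) :=
  div_nonneg hb.le (denom_pos hb _).le

lemma F_integrable (μ : Measure ℝ) [IsFiniteMeasure μ] {b : ℝ} (hb : 0 < b) :
    Integrable (fun p : ℝ × ℝ => b / ((p.2 - p.1) ^ 2 + b ^ 2)) ((volume : Measure ℝ).prod μ) := by
  rw [integrable_prod_iff' (F_cont hb).aestronglyMeasurable]
  constructor
  · exact Eventually.of_forall fun x => poisson_integrable_a hb x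
  · apply (integrable_const π).congr
    refine Eventually.of_forall fun x => ?_
    have hn : ∀ a : ℝ, ‖b / ((x - a) ^ 2 + b ^ 2)‖ = b / ((x - a) ^ 2 + b ^ 2) := fun a => by
      rw [Real.norm_eq_abs, abs_of_nonneg (F_nonneg hb (a, x))]
    simp only [hn]
    exact (poisson_integral_a hb x).symm

lemma poisson_im (b a x : ℝ) :
    (((x : ℂ) - (↑a + ↑b * Complex.I))⁻¹).im = b / ((x - a) ^ 2 + b ^ 2) := by
  rw [Complex.inv_im]
  have h1 : ((x : ℂ) - (↑a + ↑b * Complex.I)).im = -b := by simp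
  have h2 : ((x : ℂ) - (↑a + ↑b * Complex.I)).re = x - a := by simp
  rw [Complex.normSq_apply, h1, h2]
  ring

lemma inv_norm_le {b : ℝ} (hb : 0 < b) (a x : ℝ) :
    ‖((x : ℂ) - (↑a + ↑b * Complex.I))⁻¹‖ ≤ b⁻¹ := by
  rw [norm_inv]
  have h1 : ((x : ℂ) - (↑a + ↑b * Complex.I)).im = -b := by simp
  have hle : b ≤ ‖(x : ℂ) - (↑a + ↑b * Complex.I)‖ := by
    calc b = |((x : ℂ) - (↑a + ↑b * Complex.I)).im| := by rw [h1, abs_neg, abs_of_pos hb]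
    _ ≤ ‖(x : ℂ) - (↑a + ↑b * Complex.I)‖ := Complex.abs_im_le_norm _
  exact inv_anti₀ hb hle

lemma kernel_cont {b : ℝ} (hb : 0 < b) (a : ℝ) :
    Continuous (fun x : ℝ => ((x : ℂ) - (↑a + ↑b * Complex.I))⁻¹) := by
  apply (Complex.continuous_ofReal.sub continuous_const).inv₀
  intro x h
  have h2 := congrArg Complex.im h
  simp at h2
  linarith

lemma integrable_inv_kernel (μ : Measure ℝ) [IsFiniteMeasure μ] {b : ℝ} (hb : 0 < b) (a : ℝ) :
    Integrable (fun x : ℝ => ((x : ℂ) - (↑a + ↑b * Complex.I))⁻¹) μ :=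
  Integrable.mono' (integrable_const b⁻¹) (kernel_cont hb a).aestronglyMeasurable
    (Eventually.of_forall fun x => inv_norm_le hb a x)

lemma stieltjes_im (μ : Measure ℝ) [IsFiniteMeasure μ] {b : ℝ} (hb : 0 < b) (a : ℝ) :
    (stieltjes μ (↑a + ↑b * Complex.I)).im = ∫ x, b / ((x - a) ^ 2 + b ^ 2) ∂μ := by
  have h := integral_im (μ := μ) (𝕜 := ℂ) (integrable_inv_kernel μ hb a)
  simp only [RCLike.im_to_complex] at h
  rw [stieltjes, ← h]
  congr 1
  ext x
  exact poisson_im b a x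

lemma part_one (μ : Measure ℝ) [IsFiniteMeasure μ] {b : ℝ} (hb : 0 < b) :
    ∫ a : ℝ, π⁻¹ * (stieltjes μ (↑a + ↑b * Complex.I)).im = (μ Set.univ).toReal := by
  have key : ∀ a : ℝ, π⁻¹ * (stieltjes μ (↑a + ↑b * Complex.I)).im
      = π⁻¹ * ∫ x, b / ((x - a) ^ 2 + b ^ 2) ∂μ := fun a => by rw [stieltjes_im μ hb a]
  rw [integral_congr_ae (Eventually.of_forall key), integral_const_mul]
  have swap := integral_integral_swap (f := fun (a x : ℝ) => b / ((x - a) ^ 2 + b ^ 2))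
    (μ := (volume : Measure ℝ)) (ν := μ) (F_integrable μ hb)
  rw [swap]
  have : ∀ x : ℝ, (∫ a : ℝ, b / ((x - a) ^ 2 + b ^ 2)) = π := fun x => poisson_integral_a hb x
  simp only [this]
  rw [integral_const, smul_eq_mul, measureReal_def]
  field_simp

lemma part_three (μ : Measure ℝ) [IsFiniteMeasure μ] :
    Tendsto (fun b : ℝ => b * (stieltjes μ (↑b * Complex.I)).im) atTop
      (nhds (μ Set.univ).toReal) := by
  have hJ : Tendsto (fun b : ℝ => ∫ x, b ^ 2 / (x ^ 2 + b ^ 2) ∂μ) atTop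
      (nhds (μ Set.univ).toReal) := by
    have h := tendsto_integral_filter_of_dominated_convergence (μ := μ) (l := (atTop : Filter ℝ))
      (F := fun (b : ℝ) (x : ℝ) => b ^ 2 / (x ^ 2 + b ^ 2)) (f := fun _ : ℝ => (1 : ℝ))
      (bound := fun _ : ℝ => (1 : ℝ)) ?_ ?_ (integrable_const 1) ?_
    · simpa [← measureReal_def] using h
    · filter_upwards [eventually_gt_atTop (0 : ℝ)] with b hb
      exact (Continuous.div continuous_const (by continuity)
        (fun x => (denom_pos hb x).ne')).aestronglyMeasurable
    · filter_upwards [eventually_gt_atTop (0 : ℝ)] with b hb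
      refine Eventually.of_forall fun x => ?_
      rw [Real.norm_eq_abs, abs_of_nonneg (div_nonneg (sq_nonneg b) (denom_pos hb x).le)]
      rw [div_le_one (denom_pos hb x)]
      exact le_add_of_nonneg_left (sq_nonneg x)
    · refine Eventually.of_forall fun x => ?_
      have h1 : Tendsto (fun b : ℝ => x / b) atTop (nhds 0) := by
        simpa [div_eq_mul_inv] using tendsto_inv_atTop_zero.const_mul x
      have h2 : Tendsto (fun b : ℝ => ((x / b) ^ 2 + 1)⁻¹) atTop (nhds 1) := by
        have := ((h1.pow 2).add_const 1).inv₀ (by norm_num)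
        simpa using this
      refine h2.congr' ?_
      filter_upwards [eventually_gt_atTop (0 : ℝ)] with b hb
      have hb' : b ≠ 0 := hb.ne'
      rw [div_pow, div_add' _ _ _ (by positivity), inv_div]
      congr 1
      field_simp
  refine hJ.congr' ?_
  filter_upwards [eventually_gt_atTop (0 : ℝ)] with b hb
  have h0 : (↑b * Complex.I : ℂ) = ↑(0 : ℝ) + ↑b * Complex.I := by simp
  rw [h0, stieltjes_im μ hb 0, ← integral_const_mul]
  congr 1
  funext x
  rw [pow_two, mul_div_assoc, sub_zero]

lemma inner_subst (f : ℝ → ℝ) {b : ℝ} (hb : 0 < b) (x : ℝ) :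
    ∫ a : ℝ, f a * (π⁻¹ * (b / ((x - a) ^ 2 + b ^ 2)))
      = ∫ t : ℝ, f (x - b * t) * (π⁻¹ * (1 + t ^ 2)⁻¹) := by
  set g : ℝ → ℝ := fun u => f (x - u) * (π⁻¹ * (b / (u ^ 2 + b ^ 2))) with hg
  have h1 : (fun a : ℝ => f a * (π⁻¹ * (b / ((x - a) ^ 2 + b ^ 2)))) = fun a => g (x - a) := by
    funext a
    rw [hg]
    simp [sub_sub_cancel]
  rw [h1, MeasureTheory.integral_sub_left_eq_self g volume x]
  have h2 : ∀ t : ℝ, f (x - b * t) * (π⁻¹ * (1 + t ^ 2)⁻¹) = b * g (b * t) := by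
    intro t
    rw [hg]
    have hb' : b ≠ 0 := hb.ne'
    have hd : (0:ℝ) < (b*t)^2 + b^2 := denom_pos hb (b*t)
    field_simp
    ring
  rw [show (∫ t : ℝ, f (x - b * t) * (π⁻¹ * (1 + t ^ 2)⁻¹)) = ∫ t : ℝ, b * g (b * t) from
    integral_congr_ae (Eventually.of_forall h2)]
  rw [integral_const_mul, Measure.integral_comp_mul_left g b, smul_eq_mul, abs_inv,
    abs_of_pos hb, ← mul_assoc, mul_inv_cancel₀ hb.ne', one_mul]

lemma part_two (μ : Measure ℝ) [IsFiniteMeasure μ] (f : ℝ → ℝ) (hfc : Continuous f)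
    (C : ℝ) (hC : ∀ y, |f y| ≤ C) :
    Tendsto (fun b : ℝ => ∫ a : ℝ, f a * (π⁻¹ * (stieltjes μ (↑a + ↑b * Complex.I)).im))
      (nhdsWithin 0 (Set.Ioi 0)) (nhds (∫ x, f x ∂μ)) := by
  have hC0 : 0 ≤ C := le_trans (abs_nonneg _) (hC 0)
  set ν := (volume : Measure ℝ).prod μ with hν
  -- the limiting integrand and bound
  set G : ℝ → ℝ × ℝ → ℝ := fun b p => f (p.2 - b * p.1) * (π⁻¹ * (1 + p.1 ^ 2)⁻¹) with hG
  have hcont2 : ∀ t : ℝ, (0:ℝ) < 1 + t ^ 2 := fun t => by positivity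
  have hbound_int : Integrable (fun p : ℝ × ℝ => C * (π⁻¹ * (1 + p.1 ^ 2)⁻¹)) ν := by
    have hbase : Integrable (fun t : ℝ => C * (π⁻¹ * (1 + t ^ 2)⁻¹)) :=
      (integrable_inv_one_add_sq.const_mul π⁻¹).const_mul C
    have := hbase.mul_prod (integrable_const (1 : ℝ) (μ := μ))
    simpa using this
  have hGmeas : ∀ b : ℝ, AEStronglyMeasurable (G b) ν := by
    intro b
    apply Continuous.aestronglyMeasurable
    apply Continuous.mul
    · exact hfc.comp (continuous_snd.sub (continuous_const.mul continuous_fst))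
    · exact continuous_const.mul ((continuous_const.add (continuous_fst.pow 2)).inv₀
        fun p => (hcont2 p.1).ne')
  have hGbound : ∀ b : ℝ, ∀ᵐ p ∂ν, ‖G b p‖ ≤ C * (π⁻¹ * (1 + p.1 ^ 2)⁻¹) := by
    intro b
    refine Eventually.of_forall fun p => ?_
    rw [hG]
    simp only [Real.norm_eq_abs, abs_mul]
    rw [abs_of_nonneg (a := π⁻¹) (by positivity), abs_of_nonneg (a := (1 + p.1 ^ 2)⁻¹)
      (by positivity)]
    exact mul_le_mul_of_nonneg_right (hC _) (by positivity)
  have hGint : ∀ b : ℝ, Integrable (G b) ν := fun b =>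
    Integrable.mono' hbound_int (hGmeas b) (hGbound b)
  -- tendsto of the product-form integrals
  have hlim : Tendsto (fun b : ℝ => ∫ p, G b p ∂ν) (nhdsWithin 0 (Set.Ioi 0))
      (nhds (∫ x, f x ∂μ)) := by
    have hfinal : ∫ p : ℝ × ℝ, f p.2 * (π⁻¹ * (1 + p.1 ^ 2)⁻¹) ∂ν = ∫ x, f x ∂μ := by
      have h1 : ∫ p : ℝ × ℝ, f p.2 * (π⁻¹ * (1 + p.1 ^ 2)⁻¹) ∂ν
          = ∫ p : ℝ × ℝ, (π⁻¹ * (1 + p.1 ^ 2)⁻¹) * f p.2 ∂ν := by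
        congr 1
        funext p
        ring
      rw [h1, hν, integral_prod_mul (fun t : ℝ => π⁻¹ * (1 + t ^ 2)⁻¹) f,
        integral_const_mul, integral_univ_inv_one_add_sq, inv_mul_cancel₀ pi_ne_zero, one_mul]
    have h := tendsto_integral_filter_of_dominated_convergence (μ := ν)
      (l := nhdsWithin (0:ℝ) (Set.Ioi 0)) (F := G)
      (f := fun p : ℝ × ℝ => f p.2 * (π⁻¹ * (1 + p.1 ^ 2)⁻¹))
      (bound := fun p : ℝ × ℝ => C * (π⁻¹ * (1 + p.1 ^ 2)⁻¹))
      (Eventually.of_forall hGmeas) (Eventually.of_forall hGbound) hbound_int ?_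
    · rw [hfinal] at h
      exact h
    · refine Eventually.of_forall fun p => ?_
      have hc : Continuous fun b : ℝ => G b p := by
        apply Continuous.mul
        · exact hfc.comp (continuous_const.sub (continuous_id.mul continuous_const))
        · exact continuous_const
      have ht := hc.tendsto 0
      have h0 : G 0 p = f p.2 * (π⁻¹ * (1 + p.1 ^ 2)⁻¹) := by
        rw [hG]; simp
      rw [h0] at ht
      exact ht.mono_left nhdsWithin_le_nhds
  refine hlim.congr' ?_
  filter_upwards [self_mem_nhdsWithin] with b (hb : (0:ℝ) < b)
  symm
  -- for fixed b > 0, rewrite the original integral as a product integral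
  set H : ℝ × ℝ → ℝ := fun p => f p.1 * (π⁻¹ * (b / ((p.2 - p.1) ^ 2 + b ^ 2))) with hH
  have hHmeas : AEStronglyMeasurable H ν := by
    apply Continuous.aestronglyMeasurable
    exact (hfc.comp continuous_fst).mul (continuous_const.mul (F_cont hb))
  have hHint : Integrable H ν := by
    refine Integrable.mono' (((F_integrable μ hb).const_mul π⁻¹).const_mul C) hHmeas ?_
    refine Eventually.of_forall fun p => ?_
    rw [hH]
    simp only [Real.norm_eq_abs, abs_mul]
    rw [abs_of_nonneg (a := π⁻¹) (by positivity), abs_of_nonneg (F_nonneg hb p), ← mul_assoc,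
      ← mul_assoc]
    exact mul_le_mul_of_nonneg_right (mul_le_mul_of_nonneg_right (hC _) (by positivity))
      (F_nonneg hb p)
  have step1 : ∀ a : ℝ, f a * (π⁻¹ * (stieltjes μ (↑a + ↑b * Complex.I)).im)
      = ∫ x, H (a, x) ∂μ := by
    intro a
    rw [stieltjes_im μ hb a, hH]
    simp only
    calc f a * (π⁻¹ * ∫ x, b / ((x - a) ^ 2 + b ^ 2) ∂μ)
        = (f a * π⁻¹) * ∫ x, b / ((x - a) ^ 2 + b ^ 2) ∂μ := by ring
      _ = ∫ x, f a * π⁻¹ * (b / ((x - a) ^ 2 + b ^ 2)) ∂μ := (integral_const_mul _ _).symm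
      _ = ∫ x, f a * (π⁻¹ * (b / ((x - a) ^ 2 + b ^ 2))) ∂μ := by
          congr 1; funext x; ring
  rw [integral_congr_ae (Eventually.of_forall step1)]
  have swap1 : ∫ a : ℝ, ∫ x : ℝ, H (a, x) ∂μ = ∫ x : ℝ, ∫ a : ℝ, H (a, x) ∂(volume) ∂μ :=
    integral_integral_swap (f := fun a x => H (a, x)) hHint
  rw [swap1]
  have step2 : ∀ x : ℝ, (∫ a : ℝ, H (a, x)) = ∫ t : ℝ, G b (t, x) := by
    intro x
    rw [hH, hG]
    simp only
    exact inner_subst f hb x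
  rw [integral_congr_ae (Eventually.of_forall step2)]
  have swap2 : ∫ t : ℝ, ∫ x : ℝ, G b (t, x) ∂μ = ∫ x : ℝ, ∫ t : ℝ, G b (t, x) ∂(volume) ∂μ :=
    integral_integral_swap (f := fun t x => G b (t, x)) (hGint b)
  rw [← swap2, integral_integral (f := fun t x => G b (t, x)) (hGint b)]

theorem stieltjes_inversion (μ : Measure ℝ) [IsFiniteMeasure μ] :
    (∀ b : ℝ, 0 < b →
      (∀ a : ℝ, 0 ≤ π⁻¹ * (stieltjes μ (a + b * Complex.I)).im) ∧
      ∫ a : ℝ, π⁻¹ * (stieltjes μ (a + b * Complex.I)).im = (μ Set.univ).toReal) ∧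
    (∀ f : ℝ → ℝ, Continuous f → (∃ C, ∀ x, |f x| ≤ C) →
      Tendsto (fun b : ℝ => ∫ a : ℝ, f a * (π⁻¹ * (stieltjes μ (a + b * Complex.I)).im))
        (nhdsWithin 0 (Set.Ioi 0)) (nhds (∫ x, f x ∂μ))) ∧
    Tendsto (fun b : ℝ => b * (stieltjes μ (b * Complex.I)).im) atTop
      (nhds (μ Set.univ).toReal) := by
  refine ⟨fun b hb => ⟨fun a => ?_, part_one μ hb⟩, ?_, part_three μ⟩
  · rw [stieltjes_im μ hb a]
    exact mul_nonneg (by positivity)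
      (integral_nonneg fun x => div_nonneg hb.le (denom_pos hb (x - a)).le)
  · rintro f hfc ⟨C, hC⟩
    exact part_two μ f hfc C hC
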